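/- Let X be a Banach space such that X** = X ⊕ F as a topological direct sum with F finite-dimensional (X quasi-reflexive), witnessed by a continuous projection P : X** → X** with range J_X(X) and kernel F. If x ∈ X with ‖x‖ ≤ 1 is a point of weak-to-norm continuity of the identity on the closed unit ball of X, then J_X(x) is a point of weak-to-norm continuity of the identity on the closed unit ball of X**. -/

import Mathlib

open NormedSpace Filter Topology
open scoped ENNReal

noncomputable section

/-- The annihilator of a subspace `Y ⊆ X` inside the continuous dual of `X`. -/
def annih {X : Type*} [SeminormedAddCommGroup X] [NormedSpace ℝ X] (Y : Submodule ℝ X) :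
    Submodule ℝ (StrongDual ℝ X) where
  carrier := {f | ∀ y ∈ Y, f y = 0}
  add_mem' := by
    intro a b ha hb y hy
    simp [ContinuousLinearMap.add_apply, ha y hy, hb y hy]
  zero_mem' := by intro y hy; rfl
  smul_mem' := by
    intro c f hf y hy
    simp [hf y hy]

/-- A Banach space is reflexive iff the canonical embedding into its bidual is surjective. -/
def BReflexive (X : Type*) [SeminormedAddCommGroup X] [NormedSpace ℝ X] : Prop :=
  Function.Surjective (inclusionInDoubleDual ℝ X)

/-- A Banach space is coreflexive iff `X**/J_X(X)` is reflexive. -/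
def Coreflexive (X : Type*) [SeminormedAddCommGroup X] [NormedSpace ℝ X] : Prop :=
  @BReflexive (@HasQuotient.Quotient _ _ (@Submodule.hasQuotient ℝ _ (NormedField.toField (α := ℝ)).toDivisionRing.toRing _ _) (LinearMap.range (inclusionInDoubleDual ℝ X).toLinearMap)) (@Submodule.Quotient.seminormedAddCommGroup _ ContinuousLinearMap.toSeminormedAddCommGroup ℝ (NormedField.toField (α := ℝ)).toDivisionRing.toRing ContinuousLinearMap.module _) (@Submodule.Quotient.normedSpace _ ContinuousLinearMap.toSeminormedAddCommGroup ℝ (NormedField.toField (α := ℝ)).toDivisionRing.toRing ContinuousLinearMap.module _ ℝ _ ContinuousLinearMap.toNormedSpace _ _)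

/-- The adjoint of a continuous linear map between normed spaces. -/
def adj {E F : Type*} [SeminormedAddCommGroup E] [NormedSpace ℝ E]
    [SeminormedAddCommGroup F] [NormedSpace ℝ F] (f : E →L[ℝ] F) :
    StrongDual ℝ F →L[ℝ] StrongDual ℝ E :=
  (ContinuousLinearMap.compL ℝ E F ℝ).flip f

/-- `X` is weak*-sequentially dense in its bidual. -/
def WStarSeqDense (X : Type*) [SeminormedAddCommGroup X] [NormedSpace ℝ X] : Prop :=
  ∀ F : StrongDual ℝ (StrongDual ℝ X), ∃ x : ℕ → X, ∀ f : StrongDual ℝ X,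
    Tendsto (fun n => inclusionInDoubleDual ℝ X (x n) f) atTop (𝓝 (F f))

/-- `x` is a point of weak-to-norm continuity of the closed unit ball of `X`. -/
def wPC (X : Type*) [SeminormedAddCommGroup X] [NormedSpace ℝ X] (x : X) : Prop :=
  ∀ l : Filter X, (∀ᶠ y in l, ‖y‖ ≤ 1) →
    (∀ f : StrongDual ℝ X, Tendsto (fun y => f y) l (𝓝 (f x))) →
    Tendsto id l (𝓝 x)
set_option maxHeartbeats 1000000 in
theorem stmt11_aux (X : Type*) [NormedAddCommGroup X] [NormedSpace ℝ X]
    (E : Type*) [NormedAddCommGroup E] [NormedSpace ℝ E]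
    (J : X →L[ℝ] E) (hJnorm : ∀ v : X, ‖J v‖ = ‖v‖)
    (hJdual : ∀ f : StrongDual ℝ X, ∃ Φ : StrongDual ℝ E, ∀ v : X, Φ (J v) = f v)
    (P : E →L[ℝ] E)
    (hPP : P.comp P = P)
    (hrange : LinearMap.range P.toLinearMap = LinearMap.range J.toLinearMap)
    (hker : FiniteDimensional ℝ ↥(LinearMap.ker P.toLinearMap))
    (x : X) (hx : ‖x‖ ≤ 1) (hxPC : wPC X x) :
    wPC E (J x) := by
  intro l hball hweak
  set Q : E →L[ℝ] E :=
    ContinuousLinearMap.id ℝ _ - P with hQdef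
  have hPapp : ∀ G, P (P G) = P G := by
    intro G
    have := ContinuousLinearMap.ext_iff.mp hPP G
    rwa [ContinuousLinearMap.comp_apply] at this
  -- P (J x) = J x
  have hPJ : ∀ v : X, P (J v) = J v := by
    intro v
    have : J v ∈ LinearMap.range P.toLinearMap := hrange ▸ LinearMap.mem_range_self _ v
    obtain ⟨G, hG⟩ := this
    rw [← hG]; exact hPapp G
  have hQmem : ∀ G, Q G ∈ LinearMap.ker P.toLinearMap := by
    intro G
    simp only [LinearMap.mem_ker, hQdef, ContinuousLinearMap.coe_sub',
      Pi.sub_apply, ContinuousLinearMap.coe_id', id_eq, map_sub, ContinuousLinearMap.coe_coe, hPapp,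
      sub_self]
  set S := LinearMap.ker P.toLinearMap with hS
  set T : E →L[ℝ] S :=
    ContinuousLinearMap.codRestrict Q S hQmem with hT
  have hTJx : T (J x) = 0 := by
    ext1
    simp only [hT, ContinuousLinearMap.coe_codRestrict_apply, hQdef,
      ContinuousLinearMap.coe_sub', Pi.sub_apply,
      ContinuousLinearMap.coe_id', id_eq, hPJ, sub_self, ZeroMemClass.coe_zero]
  -- Step 1 : Q G → 0 in norm
  haveI : FiniteDimensional ℝ S := hker
  have hTtendsto : Tendsto (fun G => T G) l (𝓝 0) := by
    set b := Module.finBasis ℝ S with hb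
    have hrep : (fun G => T G) = fun G => ∑ i, (b.repr (T G) i) • b i := by
      funext G
      exact (b.sum_repr (T G)).symm
    rw [hrep]
    have h0 : (0 : S) = ∑ i : Fin (Module.finrank ℝ S), (0:ℝ) • b i := by simp
    rw [h0]
    refine tendsto_finset_sum _ (fun i _ => ?_)
    refine Tendsto.smul_const ?_ _
    -- coordinate functional as continuous linear map
    set φ : StrongDual ℝ E :=
      (LinearMap.toContinuousLinearMap (b.coord i)).comp T with hφ
    have h1 : Tendsto (fun G => φ G) l (𝓝 (φ (J x))) := hweak φ
    have h2 : φ (J x) = 0 := by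
      simp [hφ, hTJx]
    rw [h2] at h1
    simp only [hφ, ContinuousLinearMap.comp_apply,
      LinearMap.coe_toContinuousLinearMap', Module.Basis.coord_apply] at h1
    exact h1
  have hQtendsto : Tendsto (fun G => (Q G : E)) l (𝓝 0) := by
    have : Tendsto (fun G => ((T G : S) : E)) l
        (𝓝 ((0:S) : E)) :=
      (continuous_subtype_val.tendsto _).comp hTtendsto
    simpa [hT] using this
  have hQnorm : Tendsto (fun G => ‖Q G‖) l (𝓝 0) :=
    tendsto_zero_iff_norm_tendsto_zero.mp hQtendsto
  -- Step 2: y G with J (y G) = P G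
  have hy : ∀ G, ∃ v : X, J v = P G := by
    intro G
    have : P G ∈ LinearMap.range J.toLinearMap :=
      hrange ▸ LinearMap.mem_range_self _ G
    exact this
  choose y hyspec using hy
  have hnormJ : ∀ v : X, ‖J v‖ = ‖v‖ := by
    intro v
    exact hJnorm v
  have hPG : ∀ G, (P G : E) = G - Q G := by
    intro G
    simp [hQdef]
  -- bound on ‖y G‖
  have hybound : ∀ᶠ G in l, ‖y G‖ ≤ 1 + ‖Q G‖ := by
    filter_upwards [hball] with G hG
    have h5 : ‖y G‖ = ‖P G‖ := by rw [← hnormJ, hyspec]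
    have h6 : ‖G - Q G‖ ≤ ‖G‖ + ‖Q G‖ := norm_sub_le _ _
    rw [h5, hPG]
    linarith
  -- the normalized points
  set z : E → X := fun G => (max 1 ‖y G‖)⁻¹ • y G with hz
  have hm1 : ∀ G, (1:ℝ) ≤ max 1 ‖y G‖ := fun G => le_max_left _ _
  have hmpos : ∀ G, (0:ℝ) < max 1 ‖y G‖ := fun G => lt_of_lt_of_le one_pos (hm1 G)
  have hzball : ∀ G, ‖z G‖ ≤ 1 := by
    intro G
    rw [hz]
    simp only [norm_smul, norm_inv, Real.norm_eq_abs, abs_of_pos (hmpos G)]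
    rw [inv_mul_le_iff₀ (hmpos G), mul_one]
    exact le_max_right _ _
  have hzy : Tendsto (fun G => z G - y G) l (𝓝 0) := by
    rw [tendsto_zero_iff_norm_tendsto_zero]
    apply squeeze_zero' (Eventually.of_forall (fun G => norm_nonneg _))
      ?_ hQnorm
    filter_upwards [hybound] with G hG
    have hdiff : z G - y G = ((max 1 ‖y G‖)⁻¹ - 1) • y G := by
      rw [hz]; rw [sub_smul, one_smul]
    rw [hdiff, norm_smul, Real.norm_eq_abs]
    have hinv : (max 1 ‖y G‖)⁻¹ ≤ 1 := by
      rw [inv_le_one_iff₀]; right; exact hm1 G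
    rw [abs_of_nonpos (by linarith), neg_sub]
    have h1 : ‖y G‖ ≤ max 1 ‖y G‖ := le_max_right _ _
    have h2 : (1 - (max 1 ‖y G‖)⁻¹) * ‖y G‖ ≤ (1 - (max 1 ‖y G‖)⁻¹) * (max 1 ‖y G‖) := by
      apply mul_le_mul_of_nonneg_left h1 (by linarith)
    have h3 : (1 - (max 1 ‖y G‖)⁻¹) * (max 1 ‖y G‖) = max 1 ‖y G‖ - 1 := by
      field_simp
    have h4 : max 1 ‖y G‖ - 1 ≤ ‖Q G‖ := by
      rcases max_cases 1 ‖y G‖ with ⟨he, _⟩ | ⟨he, _⟩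
      · rw [he]; simpa using norm_nonneg (Q G)
      · rw [he]; linarith
    linarith
  -- weak convergence of y to x
  have hyweak : ∀ f : StrongDual ℝ X, Tendsto (fun G => f (y G)) l (𝓝 (f x)) := by
    intro f
    obtain ⟨Φ, hΦ⟩ := hJdual f
    have h1 : Tendsto (fun G => Φ G) l (𝓝 (Φ (J x))) := hweak Φ
    have h2 : Φ (J x) = f x := hΦ x
    have h3 : Tendsto (fun G => Φ (Q G)) l (𝓝 0) := by
      have := (Φ.continuous.tendsto 0).comp hQtendsto
      simpa [Function.comp_def] using this
    have h4 : (fun G => f (y G)) = fun G => Φ G - Φ (Q G) := by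
      funext G
      have h7 : f (y G) = Φ (J (y G)) := (hΦ _).symm
      rw [h7, hyspec, hPG]
      simp
    rw [h4]
    have := h1.sub h3
    rw [h2] at this; simpa using this
  -- weak convergence of z to x
  have hzweak : ∀ f : StrongDual ℝ X, Tendsto (fun G => f (z G)) l (𝓝 (f x)) := by
    intro f
    have h1 : Tendsto (fun G => f (z G - y G)) l (𝓝 0) := by
      have := (f.continuous.tendsto 0).comp hzy
      simp only [Function.comp_def, map_zero] at this
      exact this
    have h2 : (fun G => f (z G)) = fun G => f (y G) + f (z G - y G) := by
      funext G
      rw [← map_add]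
      congr 1
      abel
    rw [h2]
    simpa using (hyweak f).add h1
  -- apply wPC of x
  have hzx : Tendsto z l (𝓝 x) := by
    have := hxPC (Filter.map z l)
      (by rw [eventually_map]; exact Eventually.of_forall hzball)
      (fun f => by rw [tendsto_map'_iff]; exact hzweak f)
    rwa [tendsto_map'_iff] at this
  have hyx : Tendsto y l (𝓝 x) := by
    have heq : y = fun G => z G - (z G - y G) := by funext G; abel
    rw [heq]
    simpa using hzx.sub hzy
  have hPtendsto : Tendsto (fun G => (P G : E)) l (𝓝 (J x)) := by
    have h8 : Tendsto (fun G => J (y G)) l (𝓝 (J x)) :=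
      (J.continuous.tendsto x).comp hyx
    have heq : (fun G => J (y G)) = fun G => (P G : E) :=
      funext hyspec
    rwa [heq] at h8
  have hfin : Tendsto (fun G => (P G : E) + Q G) l (𝓝 (J x + 0)) :=
    hPtendsto.add hQtendsto
  have heq : (fun G => (P G : E) + Q G) = id := by
    funext G
    simp [hQdef]
  rw [heq, add_zero] at hfin
  exact hfin

set_option maxHeartbeats 1000000 in
set_option synthInstance.maxHeartbeats 400000 in
theorem stmt11 (X : Type*) [NormedAddCommGroup X] [NormedSpace ℝ X] [CompleteSpace X]
    (P : StrongDual ℝ (StrongDual ℝ X) →L[ℝ] StrongDual ℝ (StrongDual ℝ X))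
    (hPP : P.comp P = P)
    (hrange : LinearMap.range P.toLinearMap = LinearMap.range (inclusionInDoubleDual ℝ X).toLinearMap)
    (hker : @FiniteDimensional ℝ ↥(LinearMap.ker P.toLinearMap) _ (@Submodule.addCommGroup ℝ _ (NormedField.toField (α := ℝ)).toDivisionRing.toRing ContinuousLinearMap.addCommGroup _ _) _)
    (x : X) (hx : ‖x‖ ≤ 1) (hxPC : wPC X x) :
    wPC (StrongDual ℝ (StrongDual ℝ X)) (inclusionInDoubleDual ℝ X x) := by
  refine stmt11_aux X (StrongDual ℝ (StrongDual ℝ X)) (inclusionInDoubleDual ℝ X)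
    (fun v => (inclusionInDoubleDualLi ℝ (E := X)).norm_map v)
    (fun f => ⟨inclusionInDoubleDual ℝ (StrongDual ℝ X) f, fun v => rfl⟩)
    P hPP hrange ?_ x hx hxPC
  exact hker
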